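/- Let H be a subgroup of a locally compact Hausdorff topological group G (with the subspace topology on H), and consider the action of G on the set G/H of left cosets of H given by g·(xH) = (gx)H. If there exists a G-invariant mean μ on ℓ∞(G/H) and there exists a left-invariant mean ν on C_b(H), then there exists a left-invariant mean ξ on C_b(G); in particular, G is amenable. -/

import Mathlib

/-- The space `ℓ∞(X)` of bounded real-valued functions on a set `X`, as a submodule
of `X → ℝ`. -/
def BddFns (X : Type*) : Submodule ℝ (X → ℝ) where
  carrier := {f : X → ℝ | ∃ C : ℝ, ∀ x : X, |f x| ≤ C}
  add_mem' := by
    rintro f g ⟨C, hC⟩ ⟨D, hD⟩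
    exact ⟨C + D, fun x => (abs_add_le _ _).trans (add_le_add (hC x) (hD x))⟩
  zero_mem' := ⟨0, fun x => by simp⟩
  smul_mem' := by
    rintro c f ⟨C, hC⟩
    refine ⟨|c| * C, fun x => ?_⟩
    rw [Pi.smul_apply, smul_eq_mul, abs_mul]
    exact mul_le_mul_of_nonneg_left (hC x) (abs_nonneg c)

/-- A topological group is amenable if there is a left-invariant mean on the space
`C_b(G)` of bounded continuous real-valued functions on `G`. -/
def IsLCAmenable (G : Type*) [Group G] [TopologicalSpace G] : Prop :=
  ∃ μ : BoundedContinuousFunction G ℝ →ₗ[ℝ] ℝ,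
    (∀ f : BoundedContinuousFunction G ℝ, (∀ x : G, 0 ≤ f x) → 0 ≤ μ f) ∧
    μ 1 = 1 ∧
    ∀ (g : G) (f f' : BoundedContinuousFunction G ℝ),
      (∀ x : G, f' x = f (g * x)) → μ f' = μ f

/-- If `H ≤ G`, the `G`-action on `G/H` admits an invariant mean on
`ℓ∞(G/H)`, and `H` (with the subspace topology) is amenable, then `G` is amenable. -/
theorem stmt_8 {G : Type*} [Group G] [TopologicalSpace G] [IsTopologicalGroup G]
    [LocallyCompactSpace G] [T2Space G] (H : Subgroup G)
    (hμ : ∃ μ : ↥(BddFns (G ⧸ H)) →ₗ[ℝ] ℝ,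
      (∀ f : ↥(BddFns (G ⧸ H)), (∀ z : G ⧸ H, 0 ≤ (f : (G ⧸ H) → ℝ) z) → 0 ≤ μ f) ∧
      (∀ f : ↥(BddFns (G ⧸ H)), (∀ z : G ⧸ H, (f : (G ⧸ H) → ℝ) z = 1) → μ f = 1) ∧
      (∀ (g : G) (f f' : ↥(BddFns (G ⧸ H))),
        (∀ z : G ⧸ H, (f' : (G ⧸ H) → ℝ) z = (f : (G ⧸ H) → ℝ) (g • z)) → μ f' = μ f))
    (hν : IsLCAmenable ↥H) :
    IsLCAmenable G := by
  obtain ⟨μ, μpos, μone, μinv⟩ := hμ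
  obtain ⟨ν, νpos, νone, νinv⟩ := hν
  classical
  -- restriction of f to the coset x•H, viewed as a bounded continuous function on H
  set res : BoundedContinuousFunction G ℝ → G → BoundedContinuousFunction ↥H ℝ :=
    fun f x => f.compContinuous ⟨fun h => x * (h : G), continuous_const.mul continuous_subtype_val⟩ with hres
  have res_apply : ∀ f x h, res f x h = f (x * (h : G)) := fun _ _ _ => rfl
  have phi_wd : ∀ (f : BoundedContinuousFunction G ℝ) (a b : G),
      QuotientGroup.leftRel H a b → ν (res f a) = ν (res f b) := by
    intro f a b hab
    rw [QuotientGroup.leftRel_apply] at hab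
    refine (νinv ⟨a⁻¹ * b, hab⟩ (res f a) (res f b) (fun h => ?_)).symm
    simp only [res_apply, Subgroup.coe_mul]
    congr 1
    group
  -- the induced function on G ⧸ H
  set Fb : BoundedContinuousFunction G ℝ → (G ⧸ H) → ℝ :=
    fun f z => Quotient.liftOn' z (fun x => ν (res f x)) (phi_wd f) with hFb
  have Fb_mk : ∀ f x, Fb f (QuotientGroup.mk x) = ν (res f x) := fun _ _ => rfl
  have ν_bound : ∀ (g : BoundedContinuousFunction ↥H ℝ) (C : ℝ),
      (∀ h : ↥H, |g h| ≤ C) → |ν g| ≤ C := by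
    intro g C hC
    rw [abs_le]
    constructor
    · have h1 := νpos (g + C • 1) (fun x => by
        have := hC x; rw [abs_le] at this
        simp only [BoundedContinuousFunction.add_apply, BoundedContinuousFunction.smul_apply,
          BoundedContinuousFunction.coe_one, Pi.one_apply, smul_eq_mul, mul_one]
        linarith [this.1])
      rw [map_add, map_smul, νone, smul_eq_mul, mul_one] at h1
      linarith
    · have h1 := νpos (C • 1 - g) (fun x => by
        have := hC x; rw [abs_le] at this
        simp only [BoundedContinuousFunction.sub_apply, BoundedContinuousFunction.smul_apply,
          BoundedContinuousFunction.coe_one, Pi.one_apply, smul_eq_mul, mul_one]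
        linarith [this.2])
      rw [map_sub, map_smul, νone, smul_eq_mul, mul_one] at h1
      linarith
  have Fb_mem : ∀ f, Fb f ∈ BddFns (G ⧸ H) := by
    intro f
    refine ⟨‖f‖, fun z => ?_⟩
    induction z using Quotient.inductionOn' with
    | h x =>
      refine ν_bound _ _ (fun h => ?_)
      rw [res_apply, ← Real.norm_eq_abs]
      exact f.norm_coe_le_norm _
  refine ⟨{ toFun := fun f => μ ⟨Fb f, Fb_mem f⟩, map_add' := ?_, map_smul' := ?_ }, ?_, ?_, ?_⟩
  · intro f g
    show μ ⟨Fb (f + g), Fb_mem _⟩ = μ ⟨Fb f, Fb_mem f⟩ + μ ⟨Fb g, Fb_mem g⟩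
    rw [← map_add]
    refine congrArg μ (Subtype.ext (funext fun z => ?_))
    induction z using Quotient.inductionOn' with
    | h x =>
      show ν (res (f + g) x) = ν (res f x) + ν (res g x)
      rw [← map_add]
      congr 1
  · intro c f
    show μ ⟨Fb (c • f), Fb_mem _⟩ = c • μ ⟨Fb f, Fb_mem f⟩
    rw [← map_smul]
    refine congrArg μ (Subtype.ext (funext fun z => ?_))
    induction z using Quotient.inductionOn' with
    | h x =>
      show ν (res (c • f) x) = c • ν (res f x)
      rw [← map_smul]
      congr 1
  · intro f hf
    refine μpos _ (fun z => ?_)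
    induction z using Quotient.inductionOn' with
    | h x => exact νpos _ (fun h => hf _)
  · refine μone _ (fun z => ?_)
    induction z using Quotient.inductionOn' with
    | h x =>
      show ν (res 1 x) = 1
      have : res 1 x = 1 := by ext h; simp [res_apply]
      rw [this, νone]
  · intro g f f' hff'
    refine μinv g _ _ (fun z => ?_)
    induction z using Quotient.inductionOn' with
    | h x =>
      show ν (res f' x) = ν (res f (g * x))
      congr 1
      ext h
      simp only [res_apply, hff', mul_assoc]
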